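/- Let X be a square-integrable non-degenerate real random variable. Then the map τ ↦ μ_τ(X) from (0,1) to ℝ is strictly increasing, where μ_τ(X) denotes the τ-expectile of X. -/

import Mathlib

open MeasureTheory

noncomputable def Rloss (τ u : ℝ) : ℝ :=
  τ * (max u 0) ^ 2 + (1 - τ) * (max (-u) 0) ^ 2

def IsExpectile {Ω : Type*} [MeasurableSpace Ω] (μ : Measure Ω) (τ : ℝ)
    (X : Ω → ℝ) (m : ℝ) : Prop :=
  ∀ m' : ℝ, ∫ ω, Rloss τ (X ω - m) ∂μ ≤ ∫ ω, Rloss τ (X ω - m') ∂μ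

lemma lem_strict (s t : ℝ) (h : t ≤ s) : t * |t| + (s - t)^2 / 2 ≤ s * |s| := by
  rcases le_or_gt 0 t with ht | ht
  · rw [abs_of_nonneg ht, abs_of_nonneg (le_trans ht h)]; nlinarith
  · rcases le_or_gt s 0 with hs | hs
    · rw [abs_of_neg ht, abs_of_nonpos hs]; nlinarith
    · rw [abs_of_neg ht, abs_of_pos hs]; nlinarith [sq_nonneg (s+t)]

lemma Rloss_nonneg (τ u : ℝ) (h0 : 0 ≤ τ) (h1 : τ ≤ 1) : 0 ≤ Rloss τ u := by
  unfold Rloss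
  nlinarith [sq_nonneg (max u 0), sq_nonneg (max (-u) 0), mul_nonneg h0 (sq_nonneg (max u 0)),
    mul_nonneg (by linarith : (0:ℝ) ≤ 1-τ) (sq_nonneg (max (-u) 0))]

lemma Rloss_le_sq (τ u : ℝ) (h0 : 0 ≤ τ) (h1 : τ ≤ 1) : Rloss τ u ≤ u ^ 2 := by
  unfold Rloss
  rcases le_or_gt u 0 with h | h
  · rw [max_eq_right h, max_eq_left (by linarith : (0:ℝ) ≤ -u)]; nlinarith
  · rw [max_eq_left h.le, max_eq_right (by linarith : -u ≤ 0)]; nlinarith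

lemma Rloss_diff (τ τ' u : ℝ) : Rloss τ' u - Rloss τ u = (τ' - τ) * (u * |u|) := by
  unfold Rloss
  rcases le_or_gt u 0 with h | h
  · rw [max_eq_right h, max_eq_left (by linarith : (0:ℝ) ≤ -u), abs_of_nonpos h]; ring
  · rw [max_eq_left h.le, max_eq_right (by linarith : -u ≤ 0), abs_of_pos h]; ring

lemma lem2 (τ u ε : ℝ) (hε : 0 ≤ ε) (h0 : 0 ≤ τ) (h1 : τ ≤ 1) :
    Rloss τ (u - ε) ≤ Rloss τ u + 2 * ε * ((1 - τ) * max (-u) 0 - τ * max u 0) + ε ^ 2 := by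
  have ha : (max (u - ε) 0)^2 ≤ (max u 0)^2 - 2*ε*(max u 0) + ε^2 := by
    rcases le_or_gt u 0 with h | h
    · rw [max_eq_right h, max_eq_right (by linarith : u - ε ≤ 0)]; nlinarith
    · rw [max_eq_left h.le]
      rcases le_or_gt u ε with h' | h'
      · rw [max_eq_right (by linarith : u - ε ≤ 0)]; nlinarith
      · rw [max_eq_left (by linarith : (0:ℝ) ≤ u - ε)]; nlinarith
  have hb : (max (-(u - ε)) 0)^2 ≤ (max (-u) 0)^2 + 2*ε*(max (-u) 0) + ε^2 := by
    rcases le_or_gt u 0 with h | h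
    · rw [max_eq_left (by linarith : (0:ℝ) ≤ -u), max_eq_left (by linarith : (0:ℝ) ≤ -(u-ε))]
      nlinarith
    · rw [max_eq_right (by linarith : -u ≤ 0)]
      rcases le_or_gt u ε with h' | h'
      · rw [max_eq_left (by linarith : (0:ℝ) ≤ -(u-ε))]; nlinarith
      · rw [max_eq_right (by linarith : -(u-ε) ≤ 0)]; nlinarith
  unfold Rloss; nlinarith [mul_le_mul_of_nonneg_left ha h0,
    mul_le_mul_of_nonneg_left hb (by linarith : (0:ℝ) ≤ 1 - τ)]

lemma lem3 (τ u ε : ℝ) (hε : 0 ≤ ε) (h0 : 0 ≤ τ) (h1 : τ ≤ 1) :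
    Rloss τ (u + ε) ≤ Rloss τ u + 2 * ε * (τ * max u 0 - (1 - τ) * max (-u) 0) + ε ^ 2 := by
  have ha : (max (u + ε) 0)^2 ≤ (max u 0)^2 + 2*ε*(max u 0) + ε^2 := by
    rcases le_or_gt u 0 with h | h
    · rw [max_eq_right h]
      rcases le_or_gt (u+ε) 0 with h' | h'
      · rw [max_eq_right h']; nlinarith
      · rw [max_eq_left h'.le]; nlinarith
    · rw [max_eq_left h.le, max_eq_left (by linarith : (0:ℝ) ≤ u + ε)]; nlinarith
  have hb : (max (-(u + ε)) 0)^2 ≤ (max (-u) 0)^2 - 2*ε*(max (-u) 0) + ε^2 := by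
    rcases le_or_gt u 0 with h | h
    · rw [max_eq_left (by linarith : (0:ℝ) ≤ -u)]
      rcases le_or_gt (u+ε) 0 with h' | h'
      · rw [max_eq_left (by linarith : (0:ℝ) ≤ -(u+ε))]; nlinarith
      · rw [max_eq_right (by linarith : -(u+ε) ≤ 0)]; nlinarith
    · rw [max_eq_right (by linarith : -u ≤ 0), max_eq_right (by linarith : -(u+ε) ≤ 0)]
      nlinarith
  unfold Rloss; nlinarith [mul_le_mul_of_nonneg_left ha h0,
    mul_le_mul_of_nonneg_left hb (by linarith : (0:ℝ) ≤ 1 - τ)]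

lemma abs_eq_max_add (a : ℝ) : |a| = max a 0 + max (-a) 0 := by
  rcases le_or_gt a 0 with h | h
  · rw [abs_of_nonpos h, max_eq_right h, max_eq_left (by linarith)]; ring
  · rw [abs_of_pos h, max_eq_left h.le, max_eq_right (by linarith)]; ring

lemma aux_negc (c : ℝ) (hc : c < 0) (h : 0 ≤ 2 * -c * c + (-c)^2) : False := by nlinarith

lemma aux_conclude (τ₁ τ₂ P N : ℝ) (hlt : τ₁ < τ₂) (h0 : 0 < τ₁) (h1 : τ₂ < 1)
    (hP : 0 ≤ P) (hN : 0 ≤ N) (A : 0 ≤ (1 - τ₂) * N - τ₂ * P)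
    (B : 0 ≤ τ₁ * P - (1 - τ₁) * N) : P = 0 ∧ N = 0 := by
  have hA : 0 ≤ (1 - τ₁) * ((1 - τ₂) * N - τ₂ * P) := mul_nonneg (by linarith) A
  have hB : 0 ≤ (1 - τ₂) * (τ₁ * P - (1 - τ₁) * N) := mul_nonneg (by linarith) B
  have hP0 : P = 0 := by nlinarith
  refine ⟨hP0, ?_⟩
  nlinarith

set_option maxHeartbeats 1000000 in
theorem stmt14 {Ω : Type*} [MeasurableSpace Ω] (μ : Measure Ω) [IsProbabilityMeasure μ]
    (X : Ω → ℝ) (hX : Measurable X) (hX2 : Integrable (fun ω => (X ω) ^ 2) μ)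
    (hnondeg : ∀ c : ℝ, ¬ (X =ᵐ[μ] fun _ => c))
    (e : ℝ → ℝ) (he : ∀ τ ∈ Set.Ioo (0:ℝ) 1, IsExpectile μ τ X (e τ)) :
    StrictMonoOn e (Set.Ioo 0 1) := by
  intro τ₁ hτ₁ τ₂ hτ₂ hlt
  obtain ⟨hτ₁0, hτ₁1⟩ := hτ₁
  obtain ⟨hτ₂0, hτ₂1⟩ := hτ₂
  -- basic integrability
  have hX1 : Integrable X μ := by
    refine (hX2.add (integrable_const 1)).mono' hX.aestronglyMeasurable ?_
    filter_upwards with ω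
    simp only [Pi.add_apply, Real.norm_eq_abs]
    nlinarith [abs_nonneg (X ω), sq_abs (X ω), sq_nonneg (|X ω| - 1)]
  have hsq : ∀ m : ℝ, Integrable (fun ω => (X ω - m)^2) μ := by
    intro m
    have hh : (fun ω => (X ω - m)^2) = fun ω => X ω ^2 - (2*m) * X ω + m^2 := by
      funext ω; ring
    rw [hh]
    exact (hX2.sub (by exact hX1.const_mul (2*m))).add (integrable_const _)
  have hR : ∀ τ m : ℝ, 0 ≤ τ → τ ≤ 1 → Integrable (fun ω => Rloss τ (X ω - m)) μ := by
    intro τ m h0 h1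
    have hc : Continuous fun u : ℝ => Rloss τ u := by unfold Rloss; fun_prop
    refine (hsq m).mono' (hc.measurable.comp (hX.sub measurable_const)).aestronglyMeasurable ?_
    filter_upwards with ω
    rw [Real.norm_eq_abs, abs_of_nonneg (Rloss_nonneg _ _ h0 h1)]
    exact Rloss_le_sq _ _ h0 h1
  have hGint : ∀ m : ℝ, Integrable (fun ω => (X ω - m) * |X ω - m|) μ := by
    intro m
    refine (hsq m).mono'
      (((hX.sub measurable_const).mul (hX.sub measurable_const).abs).aestronglyMeasurable) ?_
    filter_upwards with ω
    rw [Real.norm_eq_abs, abs_mul, abs_abs]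
    nlinarith [sq_abs (X ω - m)]
  have hPint : ∀ m : ℝ, Integrable (fun ω => max (X ω - m) 0) μ := by
    intro m
    refine (hX1.abs.add (integrable_const (|m|))).mono'
      (((hX.sub measurable_const).max measurable_const).aestronglyMeasurable) ?_
    filter_upwards with ω
    simp only [Pi.add_apply, Real.norm_eq_abs]
    rw [abs_of_nonneg (le_max_right _ _)]
    have h1 : max (X ω - m) 0 ≤ |X ω - m| := max_le (le_abs_self _) (abs_nonneg _)
    have h2 : |X ω - m| ≤ |X ω| + |m| := abs_sub _ _
    linarith
  have hNint : ∀ m : ℝ, Integrable (fun ω => max (-(X ω - m)) 0) μ := by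
    intro m
    refine (hX1.abs.add (integrable_const (|m|))).mono'
      ((((hX.sub measurable_const).neg).max measurable_const).aestronglyMeasurable) ?_
    filter_upwards with ω
    simp only [Pi.add_apply, Real.norm_eq_abs]
    rw [abs_of_nonneg (le_max_right _ _)]
    have h1 : max (-(X ω - m)) 0 ≤ |X ω - m| := by
      rw [← abs_neg]; exact max_le (le_abs_self _) (abs_nonneg _)
    have h2 : |X ω - m| ≤ |X ω| + |m| := abs_sub _ _
    linarith
  set Gf : ℝ → ℝ := fun m => ∫ ω, (X ω - m) * |X ω - m| ∂μ with hGf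
  -- identity
  have hid : ∀ m : ℝ, ∫ ω, Rloss τ₂ (X ω - m) ∂μ - ∫ ω, Rloss τ₁ (X ω - m) ∂μ
      = (τ₂ - τ₁) * Gf m := by
    intro m
    rw [← integral_sub (hR τ₂ m hτ₂0.le hτ₂1.le) (hR τ₁ m hτ₁0.le hτ₁1.le)]
    simp_rw [Rloss_diff τ₁ τ₂]
    rw [integral_const_mul]
  -- G strictly decreasing
  have hGdec : ∀ m m' : ℝ, m < m' → Gf m' + (m' - m)^2/2 ≤ Gf m := by
    intro m m' h
    have h1 : Gf m' + (m'-m)^2/2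
        = ∫ ω, ((X ω - m') * |X ω - m'| + (m'-m)^2/2) ∂μ := by
      rw [integral_add (hGint m') (integrable_const _), integral_const]
      simp
      rfl
    rw [h1]
    refine integral_mono ((hGint m').add (integrable_const _)) (hGint m) ?_
    intro ω
    nlinarith [lem_strict (X ω - m) (X ω - m') (by linarith)]
  -- step 1 : e τ₁ ≤ e τ₂
  have opt1 := he τ₁ ⟨hτ₁0, hτ₁1⟩ (e τ₂)
  have opt2 := he τ₂ ⟨hτ₂0, hτ₂1⟩ (e τ₁)
  have hid1 := hid (e τ₁)
  have hid2 := hid (e τ₂)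
  have hGle : Gf (e τ₂) ≤ Gf (e τ₁) := by
    have h : (τ₂ - τ₁) * Gf (e τ₂) ≤ (τ₂ - τ₁) * Gf (e τ₁) := by linarith
    exact le_of_mul_le_mul_left (by linarith) (by linarith : (0:ℝ) < τ₂ - τ₁)
  have hle : e τ₁ ≤ e τ₂ := by
    by_contra hcon
    push_neg at hcon
    have := hGdec (e τ₂) (e τ₁) hcon
    nlinarith [mul_pos (sub_pos.mpr hcon) (sub_pos.mpr hcon)]
  rcases lt_or_eq_of_le hle with h | heq
  · exact h
  -- step 2: rule out equality
  exfalso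
  set m := e τ₁ with hm
  have hm2 : e τ₂ = m := heq.symm
  set P : ℝ := ∫ ω, max (X ω - m) 0 ∂μ with hPdef
  set N : ℝ := ∫ ω, max (-(X ω - m)) 0 ∂μ with hNdef
  have hPnn : 0 ≤ P := integral_nonneg fun ω => le_max_right _ _
  have hNnn : 0 ≤ N := integral_nonneg fun ω => le_max_right _ _
  -- integral of the linear upper bound
  have hlin : ∀ τ a b ε : ℝ, 0 ≤ τ → τ ≤ 1 → ∫ ω, (Rloss τ (X ω - m)
      + 2 * ε * (a * max (-(X ω - m)) 0 - b * max (X ω - m) 0) + ε^2) ∂μ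
      = (∫ ω, Rloss τ (X ω - m) ∂μ) + 2 * ε * (a * N - b * P) + ε^2 := by
    intro τ a b ε h0 h1
    have hB : Integrable (fun ω => 2 * ε * (a * max (-(X ω - m)) 0 - b * max (X ω - m) 0)) μ := by
      exact (((hNint m).const_mul a).sub ((hPint m).const_mul b)).const_mul (2*ε)
    have hAB : Integrable (fun ω => Rloss τ (X ω - m)
        + 2 * ε * (a * max (-(X ω - m)) 0 - b * max (X ω - m) 0)) μ := by
      exact (hR τ m h0 h1).add hB
    rw [integral_add hAB (integrable_const _), integral_add (hR τ m h0 h1) hB, integral_const,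
      integral_const_mul,
      integral_sub (by exact (hNint m).const_mul a) (by exact (hPint m).const_mul b),
      integral_const_mul, integral_const_mul, ← hPdef, ← hNdef]
    simp [measure_univ]
  -- Claim A : first-order condition from the right at τ₂
  have claimA : 0 ≤ (1 - τ₂) * N - τ₂ * P := by
    by_contra hc
    push_neg at hc
    set c : ℝ := (1 - τ₂) * N - τ₂ * P with hcdef
    set ε : ℝ := -c with hεdef
    have hε : 0 < ε := by rw [hεdef]; linarith
    have opt := he τ₂ ⟨hτ₂0, hτ₂1⟩ (m + ε)
    rw [hm2] at opt
    have hInt1 : Integrable (fun ω => Rloss τ₂ (X ω - (m + ε))) μ := hR τ₂ (m + ε) hτ₂0.le hτ₂1.le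
    have hInt2 : Integrable (fun ω => Rloss τ₂ (X ω - m)
        + 2 * ε * ((1-τ₂) * max (-(X ω - m)) 0 - τ₂ * max (X ω - m) 0) + ε^2) μ := by
      exact ((hR τ₂ m hτ₂0.le hτ₂1.le).add
        ((((hNint m).const_mul (1-τ₂)).sub ((hPint m).const_mul τ₂)).const_mul (2*ε))).add
        (integrable_const _)
    have key : ∫ ω, Rloss τ₂ (X ω - (m + ε)) ∂μ
        ≤ (∫ ω, Rloss τ₂ (X ω - m) ∂μ) + 2 * ε * c + ε^2 := by
      rw [hcdef, ← hlin τ₂ (1 - τ₂) τ₂ ε hτ₂0.le hτ₂1.le]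
      refine integral_mono hInt1 hInt2 ?_
      intro ω
      have h := lem2 τ₂ (X ω - m) ε hε.le hτ₂0.le hτ₂1.le
      have hh : X ω - (m + ε) = (X ω - m) - ε := by ring
      dsimp only
      rw [hh]
      linarith
    have h0 : 0 ≤ 2 * ε * c + ε^2 := by linarith
    rw [hεdef] at h0
    exact aux_negc c hc h0
  -- Claim B : first-order condition from the left at τ₁
  have claimB : 0 ≤ τ₁ * P - (1 - τ₁) * N := by
    by_contra hc
    push_neg at hc
    set c : ℝ := τ₁ * P - (1 - τ₁) * N with hcdef
    set ε : ℝ := -c with hεdef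
    have hε : 0 < ε := by rw [hεdef]; linarith
    have opt := he τ₁ ⟨hτ₁0, hτ₁1⟩ (m - ε)
    rw [← hm] at opt
    have hInt1 : Integrable (fun ω => Rloss τ₁ (X ω - (m - ε))) μ := hR τ₁ (m - ε) hτ₁0.le hτ₁1.le
    have hInt2 : Integrable (fun ω => Rloss τ₁ (X ω - m)
        + 2 * ε * ((-(1-τ₁)) * max (-(X ω - m)) 0 - (-τ₁) * max (X ω - m) 0) + ε^2) μ := by
      exact ((hR τ₁ m hτ₁0.le hτ₁1.le).add
        ((((hNint m).const_mul (-(1-τ₁))).sub ((hPint m).const_mul (-τ₁))).const_mul (2*ε))).add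
        (integrable_const _)
    have key : ∫ ω, Rloss τ₁ (X ω - (m - ε)) ∂μ
        ≤ (∫ ω, Rloss τ₁ (X ω - m) ∂μ) + 2 * ε * c + ε^2 := by
      have hrw : 2 * ε * ((-(1-τ₁)) * N - (-τ₁) * P) = 2 * ε * c := by rw [hcdef]; ring
      rw [← hrw, ← hlin τ₁ (-(1-τ₁)) (-τ₁) ε hτ₁0.le hτ₁1.le]
      refine integral_mono hInt1 hInt2 ?_
      intro ω
      have h := lem3 τ₁ (X ω - m) ε hε.le hτ₁0.le hτ₁1.le
      have hh : X ω - (m - ε) = (X ω - m) + ε := by ring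
      dsimp only
      rw [hh]
      nlinarith [h]
    have h0 : 0 ≤ 2 * ε * c + ε^2 := by linarith
    rw [hεdef] at h0
    exact aux_negc c hc h0
  -- conclude P = N = 0
  obtain ⟨hPz, hNz⟩ := aux_conclude τ₁ τ₂ P N hlt hτ₁0 hτ₂1 hPnn hNnn claimA claimB
  -- |X - m| has zero integral, contradiction with non-degeneracy
  have hh : (fun ω => |X ω - m|) = fun ω => max (X ω - m) 0 + max (-(X ω - m)) 0 := by
    funext ω; exact abs_eq_max_add _
  have habs : Integrable (fun ω => |X ω - m|) μ := by
    rw [hh]; exact (hPint m).add (hNint m)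
  have hzero : ∫ ω, |X ω - m| ∂μ = 0 := by
    rw [hh, integral_add (hPint m) (hNint m), ← hPdef, ← hNdef, hPz, hNz]; ring
  have hae : (fun ω => |X ω - m|) =ᵐ[μ] 0 := by
    rw [← integral_eq_zero_iff_of_nonneg (fun ω => abs_nonneg _) habs]
    exact hzero
  refine hnondeg m ?_
  filter_upwards [hae] with ω hω
  simp only [Pi.zero_apply] at hω
  have := abs_eq_zero.mp hω
  simpa [sub_eq_zero] using this
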